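/- Fix a constant C > 0 and for j ≥ 2, m ≥ 2j, j ≤ l ≤ m − j, define c_{j,m,l} = Σ ∏_{i=1}^{j} (κ_{m_i}/m_i!) C(m_i, l_i), where the sum is over tuples (m_1,...,m_j) with m_i ≥ 2 and Σm_i = m, and tuples (l_1,...,l_j) with 1 ≤ l_i ≤ m_i − 1 and Σl_i = l. If |κ_m|/m! ≤ C^m for all m ≥ 2, then |c_{j,m,l}| ≤ (2C)^m · C(m − j − 1, j − 1). -/

import Mathlib

open Finset

private lemma sum_choose_aux (k : ℕ) : ∀ n : ℕ,
    ∑ b ∈ Finset.range (n + 1), (b + k).choose k = (n + k + 1).choose (k + 1) := by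
  intro n
  induction n with
  | zero => simp
  | succ n ih =>
    rw [Finset.sum_range_succ, ih, show n + 1 + k = n + k + 1 from by omega,
      show n + k + 1 + 1 = (n + k + 1) + 1 from rfl]
    have h := Nat.choose_succ_succ (n + k + 1) k
    simp only [Nat.succ_eq_add_one] at h
    omega

private lemma length_adt : ∀ (k n : ℕ),
    (List.Nat.antidiagonalTuple (k + 1) n).length = (n + k).choose k := by
  intro k
  induction k with
  | zero => intro n; rw [List.Nat.antidiagonalTuple_one]; simp
  | succ k ih =>
    intro n
    show (List.Nat.antidiagonalTuple (k + 2) n).length = _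
    rw [show List.Nat.antidiagonalTuple (k + 2) n =
        (List.Nat.antidiagonal n).flatMap fun ni =>
          (List.Nat.antidiagonalTuple (k + 1) ni.2).map
            (fun x => Fin.cons ni.1 x : (Fin (k + 1) → ℕ) → (Fin (k + 2) → ℕ)) from rfl]
    rw [List.length_flatMap]
    have h1 : (List.map (List.length ∘ fun ni : ℕ × ℕ =>
        (List.Nat.antidiagonalTuple (k + 1) ni.2).map
          (fun x => Fin.cons ni.1 x : (Fin (k + 1) → ℕ) → (Fin (k + 2) → ℕ)))
        (List.Nat.antidiagonal n))
        = List.map (fun ni : ℕ × ℕ => (ni.2 + k).choose k) (List.Nat.antidiagonal n) := by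
      apply List.map_congr_left
      intro a _
      simp [ih a.2]
    simp only [Function.comp_def] at h1
    rw [h1, List.Nat.antidiagonal, List.map_map]
    have h2 : ((fun ni : ℕ × ℕ => (ni.2 + k).choose k) ∘ fun i => (i, n - i))
        = fun i => (n - i + k).choose k := rfl
    rw [h2]
    have h3 : (List.map (fun i => (n - i + k).choose k) (List.range (n + 1))).sum
        = ∑ i ∈ Finset.range (n + 1), (n - i + k).choose k := by
      rfl
    rw [h3]
    have h4 : ∑ i ∈ Finset.range (n + 1), (n - i + k).choose k
        = ∑ i ∈ Finset.range (n + 1), (i + k).choose k := by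
      have := Finset.sum_range_reflect (fun i => (i + k).choose k) (n + 1)
      simpa using this
    rw [h4, sum_choose_aux, show n + (k + 1) = n + k + 1 from rfl]

private lemma card_adt (k n : ℕ) :
    (Finset.Nat.antidiagonalTuple (k + 1) n).card = (n + k).choose k := by
  rw [Finset.card_def]
  exact length_adt k n

theorem stmt_9 (κ : ℕ → ℝ) (C : ℝ) (hC : 0 < C)
    (hb : ∀ m, 2 ≤ m → |κ m| / (Nat.factorial m : ℝ) ≤ C ^ m)
    (j m l : ℕ) (hj : 2 ≤ j) (hm : 2 * j ≤ m) (hl1 : j ≤ l) (hl2 : l ≤ m - j)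
    (c : ℝ)
    (hc : c = ∑ f ∈ (Finset.Nat.antidiagonalTuple j m).filter (fun f => ∀ i, 2 ≤ f i),
        ∑ g ∈ (Finset.Nat.antidiagonalTuple j l).filter
            (fun g => ∀ i, 1 ≤ g i ∧ g i ≤ f i - 1),
          ∏ i, (κ (f i) / (Nat.factorial (f i) : ℝ) * (Nat.choose (f i) (g i) : ℝ))) :
    |c| ≤ (2 * C) ^ m * (Nat.choose (m - j - 1) (j - 1) : ℝ) := by
  -- card bound for the outer index set
  set S := (Finset.Nat.antidiagonalTuple j m).filter (fun f => ∀ i, 2 ≤ f i) with hS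
  have hcard : S.card ≤ (m - j - 1).choose (j - 1) := by
    have hinj : Set.InjOn (fun f : Fin j → ℕ => fun i => f i - 2) ↑S := by
      intro f hf f' hf' h
      simp only [hS, Finset.mem_coe, Finset.mem_filter] at hf hf'
      funext i
      have := congrFun h i
      simp only at this
      have h2 := hf.2 i
      have h2' := hf'.2 i
      omega
    have hmaps : ∀ f ∈ S, (fun i => f i - 2) ∈ Finset.Nat.antidiagonalTuple j (m - 2 * j) := by
      intro f hf
      simp only [hS, Finset.mem_filter, Finset.Nat.mem_antidiagonalTuple] at hf ⊢
      rw [Finset.sum_tsub_distrib Finset.univ (fun i _ => hf.2 i)]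
      simp [hf.1, Finset.card_univ, mul_comm]
    have h1 := Finset.card_le_card_of_injOn _ hmaps hinj
    have h2 : (Finset.Nat.antidiagonalTuple j (m - 2 * j)).card
        = (m - j - 1).choose (j - 1) := by
      obtain ⟨k, rfl⟩ : ∃ k, j = k + 1 := ⟨j - 1, by omega⟩
      rw [card_adt]
      congr 1 <;> omega
    omega
  -- termwise bound
  have hterm : ∀ f ∈ S,
      |∑ g ∈ (Finset.Nat.antidiagonalTuple j l).filter
            (fun g => ∀ i, 1 ≤ g i ∧ g i ≤ f i - 1),
          ∏ i, (κ (f i) / (Nat.factorial (f i) : ℝ) * (Nat.choose (f i) (g i) : ℝ))|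
        ≤ (2 * C) ^ m := by
    intro f hf
    simp only [hS, Finset.mem_filter, Finset.Nat.mem_antidiagonalTuple] at hf
    obtain ⟨hfsum, hf2⟩ := hf
    calc |∑ g ∈ (Finset.Nat.antidiagonalTuple j l).filter
            (fun g => ∀ i, 1 ≤ g i ∧ g i ≤ f i - 1),
          ∏ i, (κ (f i) / (Nat.factorial (f i) : ℝ) * (Nat.choose (f i) (g i) : ℝ))|
        ≤ ∑ g ∈ (Finset.Nat.antidiagonalTuple j l).filter
            (fun g => ∀ i, 1 ≤ g i ∧ g i ≤ f i - 1),
          ∏ i, (C ^ (f i) * (Nat.choose (f i) (g i) : ℝ)) := by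
          refine (Finset.abs_sum_le_sum_abs _ _).trans (Finset.sum_le_sum fun g _ => ?_)
          rw [Finset.abs_prod]
          refine Finset.prod_le_prod (fun i _ => abs_nonneg _) fun i _ => ?_
          rw [abs_mul, Nat.abs_cast, abs_div, Nat.abs_cast]
          exact mul_le_mul_of_nonneg_right (hb (f i) (hf2 i)) (Nat.cast_nonneg _)
      _ ≤ C ^ m * 2 ^ m := by
          have hCm : ∀ g : Fin j → ℕ, ∏ i, (C ^ (f i) * (Nat.choose (f i) (g i) : ℝ))
              = C ^ m * ∏ i, (Nat.choose (f i) (g i) : ℝ) := by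
            intro g
            rw [Finset.prod_mul_distrib, Finset.prod_pow_eq_pow_sum, hfsum]
          simp_rw [hCm, ← Finset.mul_sum]
          refine mul_le_mul_of_nonneg_left ?_ (le_of_lt (pow_pos hC m))
          -- sum of products of binomials ≤ 2^m
          calc ∑ g ∈ (Finset.Nat.antidiagonalTuple j l).filter
                (fun g => ∀ i, 1 ≤ g i ∧ g i ≤ f i - 1),
              ∏ i, (Nat.choose (f i) (g i) : ℝ)
              ≤ ∑ g ∈ Fintype.piFinset (fun i => Finset.Icc 1 (f i - 1)),
                ∏ i, (Nat.choose (f i) (g i) : ℝ) := by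
                refine Finset.sum_le_sum_of_subset_of_nonneg ?_ fun g _ _ =>
                  Finset.prod_nonneg fun i _ => Nat.cast_nonneg _
                intro g hg
                simp only [Finset.mem_filter] at hg
                rw [Fintype.mem_piFinset]
                intro i
                rw [Finset.mem_Icc]
                exact hg.2 i
            _ = ∏ i, ∑ t ∈ Finset.Icc 1 (f i - 1), (Nat.choose (f i) t : ℝ) := by
                rw [Finset.prod_univ_sum]
            _ ≤ ∏ i, (2 : ℝ) ^ (f i) := by
                refine Finset.prod_le_prod (fun i _ => Finset.sum_nonneg
                  fun t _ => Nat.cast_nonneg _) fun i _ => ?_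
                have hsub : Finset.Icc 1 (f i - 1) ⊆ Finset.range (f i + 1) := by
                  intro t ht
                  rw [Finset.mem_Icc] at ht
                  rw [Finset.mem_range]
                  omega
                calc ∑ t ∈ Finset.Icc 1 (f i - 1), (Nat.choose (f i) t : ℝ)
                    ≤ ∑ t ∈ Finset.range (f i + 1), (Nat.choose (f i) t : ℝ) :=
                      Finset.sum_le_sum_of_subset_of_nonneg hsub
                        (fun t _ _ => Nat.cast_nonneg _)
                  _ = (2 : ℝ) ^ (f i) := by
                      rw [← Nat.cast_sum, Nat.sum_range_choose]
                      push_cast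
                      ring
            _ = (2 : ℝ) ^ m := by rw [Finset.prod_pow_eq_pow_sum, hfsum]
      _ = (2 * C) ^ m := by rw [mul_pow]; ring
  calc |c| ≤ ∑ f ∈ S, (2 * C) ^ m := by
        rw [hc]
        exact (Finset.abs_sum_le_sum_abs _ _).trans (Finset.sum_le_sum hterm)
    _ = S.card * (2 * C) ^ m := by rw [Finset.sum_const, nsmul_eq_mul]
    _ ≤ ((m - j - 1).choose (j - 1) : ℝ) * (2 * C) ^ m := by
        refine mul_le_mul_of_nonneg_right ?_ (by positivity)
        exact_mod_cast hcard
    _ = (2 * C) ^ m * ((m - j - 1).choose (j - 1) : ℝ) := by ring
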